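/- Let n ≥ 2 and let a : G → ℝ and b : Y → ℝ be functions on finite sets G and Y each of cardinality n. Fix g ∈ G and y ∈ Y, and suppose: (i) |a(g) + b(y')| ≤ δ for all y' ≠ y; (ii) |a(g') + b(y)| ≤ δ for all g' ≠ g; (iii) ∑_{g' ∈ G} a(g') = ∑_{y' ∈ Y} b(y'). Then |a(g) − b(y)| ≤ 2δ. -/
import Mathlib

/-- Symmetry-of-features identity, simply transitive case: if the cancellation
conditions hold with error `δ` and the total sums of `a` and `b` agree, then
the two target feature magnitudes are within `2δ` of each other. -/
theorem stmt_4 {G Y : Type*} [Fintype G] [Fintype Y] (n : ℕ) (hn : 2 ≤ n)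
    (hG : Fintype.card G = n) (hY : Fintype.card Y = n)
    (a : G → ℝ) (b : Y → ℝ) (g : G) (y : Y) (δ : ℝ) (hδ : 0 ≤ δ)
    (h1 : ∀ y' : Y, y' ≠ y → |a g + b y'| ≤ δ)
    (h2 : ∀ g' : G, g' ≠ g → |a g' + b y| ≤ δ)
    (h3 : ∑ g' : G, a g' = ∑ y' : Y, b y') :
    |a g - b y| ≤ 2 * δ := by
  classical
  set A : ℝ := ∑ y' ∈ Finset.univ.erase y, (a g + b y') with hA
  set B : ℝ := ∑ g' ∈ Finset.univ.erase g, (a g' + b y) with hB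
  have cardY : ((Finset.univ.erase y).card : ℝ) = (n : ℝ) - 1 := by
    rw [Finset.card_erase_of_mem (Finset.mem_univ y)]
    simp [hY]
    have : 1 ≤ n := by omega
    push_cast [Nat.cast_sub this]
    simp [Finset.card_univ, hY, Nat.cast_sub this]
  have cardG : ((Finset.univ.erase g).card : ℝ) = (n : ℝ) - 1 := by
    rw [Finset.card_erase_of_mem (Finset.mem_univ g)]
    have : 1 ≤ n := by omega
    simp [Finset.card_univ, hG, Nat.cast_sub this]
  have hAbound : |A| ≤ ((n : ℝ) - 1) * δ := by
    calc |A| ≤ ∑ y' ∈ Finset.univ.erase y, |a g + b y'| :=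
          Finset.abs_sum_le_sum_abs _ _
      _ ≤ ∑ _y' ∈ Finset.univ.erase y, δ := by
          apply Finset.sum_le_sum
          intro i hi
          exact h1 i (Finset.ne_of_mem_erase hi)
      _ = ((n : ℝ) - 1) * δ := by rw [Finset.sum_const, nsmul_eq_mul, cardY]
  have hBbound : |B| ≤ ((n : ℝ) - 1) * δ := by
    calc |B| ≤ ∑ g' ∈ Finset.univ.erase g, |a g' + b y| :=
          Finset.abs_sum_le_sum_abs _ _
      _ ≤ ∑ _g' ∈ Finset.univ.erase g, δ := by
          apply Finset.sum_le_sum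
          intro i hi
          exact h2 i (Finset.ne_of_mem_erase hi)
      _ = ((n : ℝ) - 1) * δ := by rw [Finset.sum_const, nsmul_eq_mul, cardG]
  have hAval : A = ((n : ℝ) - 1) * a g + (∑ y' : Y, b y') - b y := by
    rw [hA, Finset.sum_add_distrib, Finset.sum_const, nsmul_eq_mul, cardY,
      Finset.sum_erase_eq_sub (Finset.mem_univ y)]
    ring
  have hBval : B = ((n : ℝ) - 1) * b y + (∑ g' : G, a g') - a g := by
    rw [hB, Finset.sum_add_distrib, Finset.sum_const, nsmul_eq_mul, cardG,
      Finset.sum_erase_eq_sub (Finset.mem_univ g)]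
    ring
  have key : A - B = (n : ℝ) * (a g - b y) := by
    rw [hAval, hBval, h3]; ring
  have hn' : (2 : ℝ) ≤ (n : ℝ) := by exact_mod_cast hn
  have habs : (n : ℝ) * |a g - b y| ≤ 2 * (((n : ℝ) - 1) * δ) := by
    have := abs_sub (A) (B)
    calc (n : ℝ) * |a g - b y| = |A - B| := by
          rw [key, abs_mul, abs_of_nonneg (by linarith : (0:ℝ) ≤ (n:ℝ))]
      _ ≤ |A| + |B| := abs_sub _ _
      _ ≤ 2 * (((n : ℝ) - 1) * δ) := by linarith
  nlinarith [abs_nonneg (a g - b y)]
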